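/- With S as above (the pointwise limit of the Følner averaging operators, assumed to exist with Sf continuous for all f ∈ C(X)), the following are equivalent: (i) T_g S = S for all g ∈ G, where T_g f = f∘g; (ii) every orbit closure in X is uniquely ergodic. -/

import Mathlib

open Filter Topology MeasureTheory
open scoped symmDiff

noncomputable section

variable {G : Type*} [Group G] [Countable G] [DecidableEq G]
variable {X : Type*} [MetricSpace X] [CompactSpace X]
  [MeasurableSpace X] [BorelSpace X] [MulAction G X]

/-- A left Følner sequence in a countable discrete group: a sequence of finite non-empty
subsets `F_n` with `|g F_n Δ F_n|/|F_n| → 0` for every `g ∈ G`. -/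
def IsFolner (F : ℕ → Finset G) : Prop :=
  (∀ n, (F n).Nonempty) ∧
  ∀ g : G, Tendsto (fun n => ((((F n).image (g * ·)) ∆ (F n)).card : ℝ) / (F n).card)
    atTop (𝓝 0)

lemma aux_sum_diff {A B : Finset G} {φ : G → ℝ} {C : ℝ} (hC : ∀ g, |φ g| ≤ C) :
    |∑ g ∈ A, φ g - ∑ g ∈ B, φ g| ≤ (A ∆ B).card * C := by
  rw [← Finset.sum_sdiff_sub_sum_sdiff]
  calc |∑ g ∈ A \ B, φ g - ∑ g ∈ B \ A, φ g|
      ≤ |∑ g ∈ A \ B, φ g| + |∑ g ∈ B \ A, φ g| := abs_sub _ _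
    _ ≤ (∑ g ∈ A \ B, |φ g|) + ∑ g ∈ B \ A, |φ g| :=
        add_le_add (Finset.abs_sum_le_sum_abs _ _) (Finset.abs_sum_le_sum_abs _ _)
    _ = ∑ g ∈ A ∆ B, |φ g| := by
        rw [symmDiff_def, Finset.sup_eq_union, Finset.sum_union disjoint_sdiff_sdiff]
    _ ≤ (A ∆ B).card * C := by
        have := Finset.sum_le_card_nsmul (A ∆ B) (fun g => |φ g|) C (fun g _ => hC g)
        simpa [nsmul_eq_mul] using this

/-- every continuous function is integrable against a finite measure on a compact space -/
lemma aux_integrable {f : X → ℝ} (hf : Continuous f) (ν : Measure X) [IsFiniteMeasure ν] :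
    Integrable f ν := by
  have := (BoundedContinuousFunction.mkOfCompact ⟨f, hf⟩).integrable ν
  exact this

/-- invariance of each μ_x -/
lemma aux_inv (hcont : ∀ g : G, Continuous fun x : X => g • x)
    (F : ℕ → Finset G) (hF : IsFolner F)
    (μ : X → ProbabilityMeasure X)
    (hgen : ∀ x : X, ∀ f : C(X, ℝ),
      Tendsto (fun n => (∑ g ∈ F n, f (g • x)) / (F n).card)
        atTop (𝓝 (∫ y, f y ∂(μ x : Measure X))))
    (g : G) (x : X) (f : C(X, ℝ)) :
    ∫ y, f (g • y) ∂(μ x : Measure X) = ∫ y, f y ∂(μ x : Measure X) := by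
  set φ : G → ℝ := fun h => f (h • x) with hφ
  have h1 : Tendsto (fun n => (∑ h ∈ F n, φ (g * h)) / (F n).card) atTop
      (𝓝 (∫ y, f (g • y) ∂(μ x : Measure X))) := by
    have := hgen x (f.comp ⟨fun y => g • y, hcont g⟩)
    simpa [φ, mul_smul] using this
  have h2 := hgen x f
  have hbd : ∀ h : G, |φ h| ≤ ‖f‖ := fun h => by
    simpa [φ] using f.norm_coe_le_norm (h • x)
  have h3 : Tendsto (fun n => (∑ h ∈ F n, φ (g * h)) / (F n).card
      - (∑ h ∈ F n, φ h) / (F n).card) atTop (𝓝 0) := by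
    apply squeeze_zero_norm
      (a := fun n => ((((F n).image (g * ·)) ∆ (F n)).card : ℝ) / (F n).card * ‖f‖)
    · intro n
      have hcard : (0:ℝ) < (F n).card := by exact_mod_cast (hF.1 n).card_pos
      have himg : ∑ h ∈ F n, φ (g * h) = ∑ h ∈ (F n).image (g * ·), φ h :=
        (Finset.sum_image (fun a _ b _ hab => mul_left_cancel hab)).symm
      rw [himg, div_sub_div_same, Real.norm_eq_abs, abs_div, abs_of_pos hcard,
        div_mul_eq_mul_div]
      gcongr
      exact aux_sum_diff hbd
    · simpa using (hF.2 g).mul_const ‖f‖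
  have h4 : Tendsto (fun n => (∑ h ∈ F n, φ (g * h)) / (F n).card) atTop
      (𝓝 (0 + ∫ y, f y ∂(μ x : Measure X))) := by
    have := h3.add h2
    simpa [φ] using this
  have := tendsto_nhds_unique h1 h4
  simpa using this

/-- each μ_x is supported on the orbit closure -/
lemma aux_supp (F : ℕ → Finset G)
    (μ : X → ProbabilityMeasure X)
    (hgen : ∀ x : X, ∀ f : C(X, ℝ),
      Tendsto (fun n => (∑ g ∈ F n, f (g • x)) / (F n).card)
        atTop (𝓝 (∫ y, f y ∂(μ x : Measure X))))
    (x : X) :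
    (μ x : Measure X) (closure (MulAction.orbit G x)) = 1 := by
  set C := closure (MulAction.orbit G x) with hCdef
  have hC : IsClosed C := isClosed_closure
  rw [← prob_compl_eq_zero_iff hC.measurableSet]
  by_contra hne
  have hpos : 0 < (μ x : Measure X) Cᶜ := pos_iff_ne_zero.mpr hne
  obtain ⟨K, hKU, hKcl, hKpos⟩ := hC.isOpen_compl.exists_lt_isClosed hpos
  obtain ⟨f, hf0, hf1, hf01⟩ := exists_continuous_zero_one_of_isClosed hC hKcl
    (Set.disjoint_of_subset_right hKU disjoint_compl_right)
  have hint0 : ∫ y, f y ∂(μ x : Measure X) = 0 := by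
    have hav : ∀ n, (∑ g ∈ F n, f (g • x)) / ((F n).card : ℝ) = 0 := by
      intro n
      have : ∀ g ∈ F n, f (g • x) = 0 := fun g _ =>
        hf0 (subset_closure (MulAction.mem_orbit x g))
      rw [Finset.sum_congr rfl this]
      simp
    have := hgen x f
    rw [show (fun n => (∑ g ∈ F n, f (g • x)) / ((F n).card : ℝ)) = fun _ => (0:ℝ)
      from funext hav] at this
    exact tendsto_nhds_unique this tendsto_const_nhds
  have hKint : ((μ x : Measure X) K).toReal ≤ ∫ y, f y ∂(μ x : Measure X) := by
    change (μ x : Measure X).real K ≤ _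
    rw [← MeasureTheory.integral_indicator_one hKcl.measurableSet]
    apply integral_mono ((integrable_const (1:ℝ)).indicator hKcl.measurableSet)
      (aux_integrable f.continuous _)
    intro z
    by_cases hz : z ∈ K
    · simp [Set.indicator_of_mem hz, hf1 hz]
    · simp only [Set.indicator_of_notMem hz]
      exact (hf01 z).1
  rw [hint0] at hKint
  have : (0:ℝ) < ((μ x : Measure X) K).toReal :=
    ENNReal.toReal_pos (pos_iff_ne_zero.mp hKpos) (measure_ne_top _ _)
  linarith

/-- extensionality of probability measures via integrals of continuous functions -/
lemma aux_ext {ν₁ ν₂ : ProbabilityMeasure X}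
    (h : ∀ f : C(X, ℝ), ∫ y, f y ∂(ν₁ : Measure X) = ∫ y, f y ∂(ν₂ : Measure X)) :
    ν₁ = ν₂ := by
  apply Subtype.ext
  haveI : IsProbabilityMeasure (ν₁ : Measure X) := ν₁.prop
  haveI : IsProbabilityMeasure (ν₂ : Measure X) := ν₂.prop
  apply ext_of_forall_lintegral_eq_of_IsFiniteMeasure (μ := (ν₁ : Measure X)) (ν := (ν₂ : Measure X))
  intro f
  have hc : Continuous fun z => (f z : ℝ) := NNReal.continuous_coe.comp f.continuous
  rw [lintegral_coe_eq_integral _ (aux_integrable hc _),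
    lintegral_coe_eq_integral _ (aux_integrable hc _)]
  congr 1
  exact h ⟨fun z => (f z : ℝ), hc⟩

/-- invariance of μ_x as a pushforward statement -/
lemma aux_map (hcont : ∀ g : G, Continuous fun x : X => g • x)
    {ν : Measure X} [IsProbabilityMeasure ν] (g : G)
    (hinv : ∀ f : C(X, ℝ), ∫ y, f (g • y) ∂ν = ∫ y, f y ∂ν) :
    Measure.map (fun y : X => g • y) ν = ν := by
  haveI : IsProbabilityMeasure (Measure.map (fun y : X => g • y) ν) :=
    Measure.isProbabilityMeasure_map ((hcont g).measurable.aemeasurable)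
  apply ext_of_forall_lintegral_eq_of_IsFiniteMeasure
  intro f
  have hc : Continuous fun z => (f z : ℝ) := NNReal.continuous_coe.comp f.continuous
  rw [lintegral_map (f.continuous.measurable.coe_nnreal_ennreal) ((hcont g).measurable)]
  rw [lintegral_coe_eq_integral _ (aux_integrable hc _)]
  have : Integrable (fun y => ((f (g • y) : ℝ))) ν := aux_integrable (hc.comp (hcont g)) _
  rw [lintegral_coe_eq_integral (fun y => f (g • y)) this]
  congr 1
  exact hinv ⟨fun z => (f z : ℝ), hc⟩

/-- integrating Sf against an invariant measure gives the integral of f -/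
lemma aux_dct (hcont : ∀ g : G, Continuous fun x : X => g • x)
    (F : ℕ → Finset G) (hF : IsFolner F)
    (μ : X → ProbabilityMeasure X)
    (hgen : ∀ x : X, ∀ f : C(X, ℝ),
      Tendsto (fun n => (∑ g ∈ F n, f (g • x)) / (F n).card)
        atTop (𝓝 (∫ y, f y ∂(μ x : Measure X))))
    (ν : ProbabilityMeasure X)
    (hν : ∀ g : G, Measure.map (fun y : X => g • y) (ν : Measure X) = (ν : Measure X))
    (f : C(X, ℝ)) :
    ∫ y, (∫ z, f z ∂(μ y : Measure X)) ∂(ν : Measure X) = ∫ y, f y ∂(ν : Measure X) := by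
  set A : ℕ → X → ℝ := fun n y => (∑ g ∈ F n, f (g • y)) / (F n).card with hA
  have hAcont : ∀ n, Continuous (A n) :=
    fun n => (continuous_finset_sum _ fun g _ => f.continuous.comp (hcont g)).div_const _
  have hDCT : Tendsto (fun n => ∫ y, A n y ∂(ν : Measure X)) atTop
      (𝓝 (∫ y, (∫ z, f z ∂(μ y : Measure X)) ∂(ν : Measure X))) := by
    apply tendsto_integral_of_dominated_convergence (bound := fun _ => ‖f‖)
    · exact fun n => (hAcont n).aestronglyMeasurable
    · exact integrable_const _
    · intro n
      apply Eventually.of_forall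
      intro y
      have hcard : (0:ℝ) < (F n).card := by exact_mod_cast (hF.1 n).card_pos
      rw [Real.norm_eq_abs, hA]
      simp only
      rw [abs_div, abs_of_pos hcard, div_le_iff₀ hcard]
      calc |∑ g ∈ F n, f (g • y)| ≤ ∑ g ∈ F n, |f (g • y)| := Finset.abs_sum_le_sum_abs _ _
        _ ≤ (F n).card • ‖f‖ := Finset.sum_le_card_nsmul _ _ _
            (fun g _ => f.norm_coe_le_norm (g • y))
        _ = ‖f‖ * (F n).card := by rw [nsmul_eq_mul, mul_comm]
    · exact Eventually.of_forall fun y => hgen y f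
  have hAn : ∀ n, ∫ y, A n y ∂(ν : Measure X) = ∫ y, f y ∂(ν : Measure X) := by
    intro n
    have hcard : ((F n).card : ℝ) ≠ 0 := by
      exact_mod_cast (hF.1 n).card_pos.ne'
    rw [hA]
    simp only
    rw [integral_div, integral_finset_sum (F n) (f := fun g y => f (g • y))
      (fun g _ => aux_integrable (show Continuous fun y => f (g • y)
        from f.continuous.comp (hcont g)) _)]
    have : ∀ g ∈ F n, ∫ y, f (g • y) ∂(ν : Measure X) = ∫ y, f y ∂(ν : Measure X) := by
      intro g _
      have h := integral_map (μ := (ν : Measure X)) ((hcont g).measurable.aemeasurable)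
        (f.continuous.aestronglyMeasurable (μ := Measure.map (fun y : X => g • y) (ν : Measure X)))
      rw [hν g] at h
      exact h.symm
    rw [Finset.sum_congr rfl this, Finset.sum_const, nsmul_eq_mul]
    exact mul_div_cancel_left₀ _ hcard
  rw [show (fun n => ∫ y, A n y ∂(ν : Measure X)) = fun _ => ∫ y, f y ∂(ν : Measure X)
    from funext hAn] at hDCT
  exact tendsto_nhds_unique hDCT tendsto_const_nhds
/-- Let `S` be the pointwise limit of the Følner averaging operators, `Sf(x) = μ_x(f)`,
where every `x` is `μ_x`-generic along the left Følner sequence `𝓕` and `x ↦ μ_x` is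
weak*-continuous.  Then `T_g S = S` for all `g ∈ G` (where `T_g f = f ∘ g`) if and only
if every orbit closure is uniquely ergodic. -/
theorem TgS_eq_S_iff_orbit_closures_uniquely_ergodic
    (hcont : ∀ g : G, Continuous fun x : X => g • x)
    (F : ℕ → Finset G) (hF : IsFolner F)
    (μ : X → ProbabilityMeasure X) (hμcont : Continuous μ)
    (hgen : ∀ x : X, ∀ f : C(X, ℝ),
      Tendsto (fun n => (∑ g ∈ F n, f (g • x)) / (F n).card)
        atTop (𝓝 (∫ y, f y ∂(μ x : Measure X)))) :
    (∀ g : G, ∀ x : X, ∀ f : C(X, ℝ),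
        ∫ y, f y ∂(μ (g • x) : Measure X) = ∫ y, f y ∂(μ x : Measure X)) ↔
      (∀ x : X, ∃! ν : ProbabilityMeasure X,
        (∀ g : G, Measure.map (fun y : X => g • y) (ν : Measure X) = (ν : Measure X)) ∧
        (ν : Measure X) (closure (MulAction.orbit G x)) = 1) := by
  have key : ∀ z : X, ∀ g' : G,
      Measure.map (fun y : X => g' • y) (μ z : Measure X) = (μ z : Measure X) :=
    fun z g' => aux_map hcont g' (fun f => aux_inv hcont F hF μ hgen g' z f)
  constructor
  · intro hi x
    refine ⟨μ x, ⟨key x, aux_supp F μ hgen x⟩, ?_⟩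
    rintro ν ⟨hνinv, hνC⟩
    apply aux_ext
    intro f
    have h6 := aux_dct hcont F hF μ hgen ν hνinv f
    have hC : IsClosed (closure (MulAction.orbit G x)) := isClosed_closure
    haveI : IsProbabilityMeasure (ν : Measure X) := ν.prop
    have hae : ∀ᵐ y ∂(ν : Measure X), y ∈ closure (MulAction.orbit G x) := by
      rw [ae_iff]
      have := (prob_compl_eq_zero_iff hC.measurableSet).mpr hνC
      simpa [Set.compl_def] using this
    have hconst : ∀ y ∈ closure (MulAction.orbit G x),
        ∫ z, f z ∂(μ y : Measure X) = ∫ z, f z ∂(μ x : Measure X) := by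
      have hcl : IsClosed {y | ∫ z, f z ∂(μ y : Measure X) = ∫ z, f z ∂(μ x : Measure X)} := by
        apply isClosed_eq ?_ continuous_const
        have h7 := ProbabilityMeasure.continuous_integral_boundedContinuousFunction
          (BoundedContinuousFunction.mkOfCompact f)
        have h8 := h7.comp hμcont
        exact h8
      refine closure_minimal ?_ hcl
      rintro y ⟨g, rfl⟩
      exact hi g x f
    calc ∫ z, f z ∂(ν : Measure X)
        = ∫ y, (∫ z, f z ∂(μ y : Measure X)) ∂(ν : Measure X) := h6.symm
      _ = ∫ y, (∫ z, f z ∂(μ x : Measure X)) ∂(ν : Measure X) :=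
          integral_congr_ae (hae.mono fun y hy => hconst y hy)
      _ = ∫ z, f z ∂(μ x : Measure X) := by simp
  · intro hUE g x f
    obtain ⟨ν₀, _, huniq⟩ := hUE x
    have h1 : μ x = ν₀ := huniq _ ⟨key x, aux_supp F μ hgen x⟩
    have h2 : μ (g • x) = ν₀ := huniq _ ⟨key (g • x), by
      have := aux_supp F μ hgen (g • x)
      rwa [MulAction.orbit_smul] at this⟩
    rw [show μ (g • x) = μ x from h2.trans h1.symm]

end
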